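/- Let q > 1, γ ≥ 1, and suppose measurable nonnegative functions u, v, w on Q_T satisfy ‖u‖_{L^{q+γ}(Q_T)} ≤ C₂(1 + ‖w‖_{L^{q+γ}(Q_T)}), ‖v‖_{L^{q+γ}(Q_T)} ≤ C₃(1 + ‖w‖_{L^{q+γ}(Q_T)}), and ∫∫_{Q_T} w^{q+γ} ≤ ∫∫_{Q_T} u^α v^β w^q + K₀ for some constants C₂, C₃, K₀ ≥ 0 and exponents α, β ≥ 1 with α + β < γ. Assume also 1/r + 1/s + q/(q+γ) = 1 with rα ≤ q+γ, sβ ≤ q+γ. Then ‖w‖_{L^{q+γ}(Q_T)} is bounded by a constant depending only on C₂, C₃, K₀, α, β, γ, q, and |Q_T|. -/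

import Mathlib

open MeasureTheory
open scoped ENNReal

private lemma aux_conv {X : Type} [MeasurableSpace X] {μ : Measure X} {f : X → ℝ} {P : ℝ}
    (hP : 0 < P) (hf0 : ∀ x, 0 ≤ f x) (hf : MemLp f (ENNReal.ofReal P) μ) :
    AEMeasurable (fun x => ENNReal.ofReal (f x ^ P)) μ ∧
    (∫⁻ x, ENNReal.ofReal (f x ^ P) ∂μ) ≠ ⊤ ∧
    (∫ x, f x ^ P ∂μ) = (∫⁻ x, ENNReal.ofReal (f x ^ P) ∂μ).toReal := by
  have h0 : 0 ≤ᵐ[μ] fun x => f x ^ P :=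
    Filter.Eventually.of_forall fun x => Real.rpow_nonneg (hf0 x) P
  have hm : AEMeasurable (fun x => f x ^ P) μ :=
    hf.aestronglyMeasurable.aemeasurable.pow aemeasurable_const
  have hint : Integrable (fun x => f x ^ P) μ := by
    have h := hf.integrable_norm_rpow (ENNReal.ofReal_pos.mpr hP).ne' ENNReal.ofReal_ne_top
    simpa [ENNReal.toReal_ofReal hP.le, Real.norm_of_nonneg (hf0 _)] using h
  exact ⟨hm.ennreal_ofReal, ((hasFiniteIntegral_iff_ofReal h0).1 hint.2).ne,
    integral_eq_lintegral_of_nonneg_ae h0 hm.aestronglyMeasurable⟩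

set_option maxHeartbeats 1000000 in
/-- Core integral estimate of Theorem 1: under the duality bounds relating `u, v` to `w`,
the energy inequality, and admissible Hölder exponents with `α + β < γ`, the
`L^(q+γ)` norm of `w` is bounded by a constant depending only on
`C₂, C₃, K₀, α, β, γ, q` and the total measure `V` of `Q_T`. -/
theorem stmt_7 (q γ α β r s C₂ C₃ K₀ : ℝ) (V : ℝ≥0∞)
    (hq : 1 < q) (hγ : 1 ≤ γ) (hα : 1 ≤ α) (hβ : 1 ≤ β) (hab : α + β < γ)
    (hC₂ : 0 ≤ C₂) (hC₃ : 0 ≤ C₃) (hK₀ : 0 ≤ K₀)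
    (hr : 1 < r) (hs : 1 < s)
    (hrs : 1 / r + 1 / s + q / (q + γ) = 1)
    (hrα : r * α ≤ q + γ) (hsβ : s * β ≤ q + γ) (hV : V ≠ ⊤) :
    ∃ C : ℝ, ∀ (X : Type) (_ : MeasurableSpace X) (μ : Measure X),
      μ Set.univ = V →
      ∀ u v w : X → ℝ,
        (∀ x, 0 ≤ u x) → (∀ x, 0 ≤ v x) → (∀ x, 0 ≤ w x) →
        MemLp u (ENNReal.ofReal (q + γ)) μ →
        MemLp v (ENNReal.ofReal (q + γ)) μ →
        MemLp w (ENNReal.ofReal (q + γ)) μ →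
        (∫ x, u x ^ (q + γ) ∂μ) ^ (1 / (q + γ)) ≤
          C₂ * (1 + (∫ x, w x ^ (q + γ) ∂μ) ^ (1 / (q + γ))) →
        (∫ x, v x ^ (q + γ) ∂μ) ^ (1 / (q + γ)) ≤
          C₃ * (1 + (∫ x, w x ^ (q + γ) ∂μ) ^ (1 / (q + γ))) →
        (∫ x, w x ^ (q + γ) ∂μ) ≤ (∫ x, u x ^ α * v x ^ β * w x ^ q ∂μ) + K₀ →
        (∫ x, w x ^ (q + γ) ∂μ) ^ (1 / (q + γ)) ≤ C := by
  set P : ℝ := q + γ with hPdef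
  have hP : 0 < P := by simp only [hPdef]; linarith
  set θ : ℝ := (γ - α - β) / P with hθdef
  have hθ : 0 < θ := div_pos (by linarith) hP
  set σ : ℝ := α + β + q with hσdef
  have hσ : 0 < σ := by simp only [hσdef]; linarith
  set D : ℝ := C₂ ^ α * C₃ ^ β * V.toReal ^ θ with hDdef
  have hD : 0 ≤ D :=
    mul_nonneg (mul_nonneg (Real.rpow_nonneg hC₂ _) (Real.rpow_nonneg hC₃ _))
      (Real.rpow_nonneg ENNReal.toReal_nonneg _)
  set E : ℝ := (D + K₀) * 2 ^ σ with hEdef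
  have hE : 0 ≤ E := mul_nonneg (by linarith) (Real.rpow_nonneg (by norm_num) _)
  refine ⟨max 1 (E ^ (1 / (γ - α - β))), ?_⟩
  intro X mX μ hμ u v w hu0 hv0 hw0 hu hv hw hu2 hv2 hw2
  obtain ⟨hUm, hUt, hUe⟩ := aux_conv hP hu0 hu
  obtain ⟨hVm, hVt, hVe⟩ := aux_conv hP hv0 hv
  obtain ⟨hWm, hWt, hWe⟩ := aux_conv hP hw0 hw
  set A : ℝ := ∫ x, u x ^ P ∂μ with hAdef
  set B : ℝ := ∫ x, v x ^ P ∂μ with hBdef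
  set W : ℝ := ∫ x, w x ^ P ∂μ with hWdef
  have hA0 : 0 ≤ A := integral_nonneg fun x => Real.rpow_nonneg (hu0 x) _
  have hB0 : 0 ≤ B := integral_nonneg fun x => Real.rpow_nonneg (hv0 x) _
  have hW0 : 0 ≤ W := integral_nonneg fun x => Real.rpow_nonneg (hw0 x) _
  set M : ℝ := W ^ (1 / P) with hMdef
  have hM0 : 0 ≤ M := Real.rpow_nonneg hW0 _
  have h1M : (0:ℝ) < 1 + M := by linarith
  -- Hölder with four functions
  set F : Fin 4 → X → ℝ≥0∞ :=
    ![fun x => ENNReal.ofReal (u x ^ P), fun x => ENNReal.ofReal (v x ^ P),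
      fun x => ENNReal.ofReal (w x ^ P), fun _ => 1] with hFdef
  set e : Fin 4 → ℝ := ![α / P, β / P, q / P, θ] with hedef
  have hesum : ∑ i, e i = 1 := by
    simp only [hedef, Fin.sum_univ_four, Matrix.cons_val_zero, Matrix.cons_val_one,
      Matrix.head_cons, Matrix.cons_val_two, Matrix.tail_cons, Matrix.cons_val_three, hθdef]
    field_simp
    ring
  have hFm : ∀ i ∈ Finset.univ, AEMeasurable (F i) μ := by
    intro i _
    fin_cases i
    · exact hUm
    · exact hVm
    · exact hWm
    · exact aemeasurable_const
  have henn : ∀ i ∈ Finset.univ, 0 ≤ e i := by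
    intro i _
    fin_cases i
    · exact div_nonneg (by linarith) hP.le
    · exact div_nonneg (by linarith) hP.le
    · exact div_nonneg (by linarith) hP.le
    · exact hθ.le
  have hHolder := ENNReal.lintegral_prod_norm_pow_le (μ := μ) Finset.univ hFm hesum henn
  -- identify the left-hand side
  have key : ∀ (a c : ℝ), 0 ≤ a → 0 ≤ c →
      ENNReal.ofReal (a ^ P) ^ (c / P) = ENNReal.ofReal (a ^ c) := by
    intro a c ha hc
    rw [ENNReal.ofReal_rpow_of_nonneg (Real.rpow_nonneg ha P) (div_nonneg hc hP.le)]
    congr 1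
    rw [← Real.rpow_mul ha]
    congr 1
    field_simp
  have hLHS : ∀ x, ∏ i, F i x ^ e i = ENNReal.ofReal (u x ^ α * v x ^ β * w x ^ q) := by
    intro x
    simp only [Fin.prod_univ_four, hFdef, hedef, Matrix.cons_val_zero, Matrix.cons_val_one,
      Matrix.head_cons, Matrix.cons_val_two, Matrix.tail_cons, Matrix.cons_val_three,
      ENNReal.one_rpow, mul_one]
    rw [key (u x) α (hu0 x) (by linarith), key (v x) β (hv0 x) (by linarith),
      key (w x) q (hw0 x) (by linarith),
      ← ENNReal.ofReal_mul (Real.rpow_nonneg (hu0 x) _),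
      ← ENNReal.ofReal_mul (mul_nonneg (Real.rpow_nonneg (hu0 x) _) (Real.rpow_nonneg (hv0 x) _))]
  -- the mixed integral, as a lintegral
  have hmix0 : 0 ≤ᵐ[μ] fun x => u x ^ α * v x ^ β * w x ^ q :=
    Filter.Eventually.of_forall fun x =>
      mul_nonneg (mul_nonneg (Real.rpow_nonneg (hu0 x) _) (Real.rpow_nonneg (hv0 x) _))
        (Real.rpow_nonneg (hw0 x) _)
  have hmixm : AEMeasurable (fun x => u x ^ α * v x ^ β * w x ^ q) μ :=
    ((hu.aestronglyMeasurable.aemeasurable.pow aemeasurable_const).mul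
      (hv.aestronglyMeasurable.aemeasurable.pow aemeasurable_const)).mul
      (hw.aestronglyMeasurable.aemeasurable.pow aemeasurable_const)
  have hmixe : (∫ x, u x ^ α * v x ^ β * w x ^ q ∂μ) =
      (∫⁻ x, ENNReal.ofReal (u x ^ α * v x ^ β * w x ^ q) ∂μ).toReal :=
    integral_eq_lintegral_of_nonneg_ae hmix0 hmixm.aestronglyMeasurable
  -- the RHS of Hölder
  set U : ℝ≥0∞ := ∫⁻ x, ENNReal.ofReal (u x ^ P) ∂μ with hUdef
  set Vl : ℝ≥0∞ := ∫⁻ x, ENNReal.ofReal (v x ^ P) ∂μ with hVldef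
  set Wl : ℝ≥0∞ := ∫⁻ x, ENNReal.ofReal (w x ^ P) ∂μ with hWldef
  have hRHS : ∏ i, (∫⁻ a, F i a ∂μ) ^ e i =
      U ^ (α / P) * Vl ^ (β / P) * Wl ^ (q / P) * (μ Set.univ) ^ θ := by
    simp only [Fin.prod_univ_four, hFdef, hedef, Matrix.cons_val_zero, Matrix.cons_val_one,
      Matrix.head_cons, Matrix.cons_val_two, Matrix.tail_cons, Matrix.cons_val_three,
      lintegral_one]
    rfl
  have hRfin : U ^ (α / P) * Vl ^ (β / P) * Wl ^ (q / P) * (μ Set.univ) ^ θ ≠ ⊤ := by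
    rw [hμ]
    exact ENNReal.mul_ne_top (ENNReal.mul_ne_top (ENNReal.mul_ne_top
      (ENNReal.rpow_ne_top_of_nonneg (div_nonneg (by linarith) hP.le) hUt)
      (ENNReal.rpow_ne_top_of_nonneg (div_nonneg (by linarith) hP.le) hVt))
      (ENNReal.rpow_ne_top_of_nonneg (div_nonneg (by linarith) hP.le) hWt))
      (ENNReal.rpow_ne_top_of_nonneg hθ.le hV)
  -- real Hölder estimate
  have hmain : (∫ x, u x ^ α * v x ^ β * w x ^ q ∂μ) ≤
      A ^ (α / P) * B ^ (β / P) * W ^ (q / P) * V.toReal ^ θ := by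
    rw [hmixe]
    have h1 : (∫⁻ x, ENNReal.ofReal (u x ^ α * v x ^ β * w x ^ q) ∂μ) ≤
        U ^ (α / P) * Vl ^ (β / P) * Wl ^ (q / P) * (μ Set.univ) ^ θ := by
      rw [← hRHS]
      calc (∫⁻ x, ENNReal.ofReal (u x ^ α * v x ^ β * w x ^ q) ∂μ)
          = ∫⁻ x, ∏ i, F i x ^ e i ∂μ := by
            refine lintegral_congr fun x => (hLHS x).symm
        _ ≤ _ := hHolder
    calc (∫⁻ x, ENNReal.ofReal (u x ^ α * v x ^ β * w x ^ q) ∂μ).toReal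
        ≤ (U ^ (α / P) * Vl ^ (β / P) * Wl ^ (q / P) * (μ Set.univ) ^ θ).toReal :=
          ENNReal.toReal_mono hRfin h1
      _ = A ^ (α / P) * B ^ (β / P) * W ^ (q / P) * V.toReal ^ θ := by
          rw [hμ, ENNReal.toReal_mul, ENNReal.toReal_mul, ENNReal.toReal_mul,
            ← ENNReal.toReal_rpow, ← ENNReal.toReal_rpow, ← ENNReal.toReal_rpow,
            ← ENNReal.toReal_rpow, ← hUe, ← hVe, ← hWe]
  -- now the purely real argument
  have hexp : ∀ (a : ℝ) (c : ℝ), 0 ≤ a → a ^ (c / P) = (a ^ (1 / P)) ^ c := by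
    intro a c ha
    rw [← Real.rpow_mul ha]
    congr 1
    field_simp
  have hAb : A ^ (α / P) ≤ (C₂ * (1 + M)) ^ α := by
    rw [hexp A α hA0]
    exact Real.rpow_le_rpow (Real.rpow_nonneg hA0 _) hu2 (by linarith)
  have hBb : B ^ (β / P) ≤ (C₃ * (1 + M)) ^ β := by
    rw [hexp B β hB0]
    exact Real.rpow_le_rpow (Real.rpow_nonneg hB0 _) hv2 (by linarith)
  have hWb : W ^ (q / P) = M ^ q := by rw [hexp W q hW0]
  have hMP : M ^ P = W := by
    rw [hMdef, ← Real.rpow_mul hW0]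
    field_simp
    exact Real.rpow_one W
  have hstep : M ^ P ≤ D * ((1 + M) ^ (α + β) * M ^ q) + K₀ := by
    rw [hMP]
    refine le_trans hw2 (add_le_add_left ?_ K₀)
    refine le_trans hmain ?_
    rw [hWb]
    have h1 : A ^ (α / P) * B ^ (β / P) ≤ (C₂ * (1 + M)) ^ α * (C₃ * (1 + M)) ^ β :=
      mul_le_mul hAb hBb (Real.rpow_nonneg hB0 _) (Real.rpow_nonneg (by positivity) _)
    have h2 : (C₂ * (1 + M)) ^ α * (C₃ * (1 + M)) ^ β =
        C₂ ^ α * C₃ ^ β * (1 + M) ^ (α + β) := by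
      rw [Real.mul_rpow hC₂ h1M.le, Real.mul_rpow hC₃ h1M.le, Real.rpow_add h1M]
      ring
    calc A ^ (α / P) * B ^ (β / P) * M ^ q * V.toReal ^ θ
        ≤ (C₂ * (1 + M)) ^ α * (C₃ * (1 + M)) ^ β * M ^ q * V.toReal ^ θ := by
          refine mul_le_mul_of_nonneg_right (mul_le_mul_of_nonneg_right h1
            (Real.rpow_nonneg hM0 _)) (Real.rpow_nonneg ENNReal.toReal_nonneg _)
      _ = D * ((1 + M) ^ (α + β) * M ^ q) := by rw [h2, hDdef]; ring
  -- finish: bound M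
  have hfinal : M ^ P ≤ (D + K₀) * (1 + M) ^ σ := by
    have hMq : M ^ q ≤ (1 + M) ^ q :=
      Real.rpow_le_rpow hM0 (by linarith) (by linarith)
    have h3 : (1 + M) ^ (α + β) * M ^ q ≤ (1 + M) ^ σ := by
      calc (1 + M) ^ (α + β) * M ^ q ≤ (1 + M) ^ (α + β) * (1 + M) ^ q :=
            mul_le_mul_of_nonneg_left hMq (Real.rpow_nonneg h1M.le _)
        _ = (1 + M) ^ σ := by rw [← Real.rpow_add h1M, hσdef]
    have h4 : (1:ℝ) ≤ (1 + M) ^ σ := Real.one_le_rpow (by linarith) hσ.le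
    calc M ^ P ≤ D * ((1 + M) ^ (α + β) * M ^ q) + K₀ := hstep
      _ ≤ D * (1 + M) ^ σ + K₀ * (1 + M) ^ σ := by
          refine add_le_add (mul_le_mul_of_nonneg_left h3 hD) ?_
          simpa using mul_le_mul_of_nonneg_left h4 hK₀
      _ = (D + K₀) * (1 + M) ^ σ := by ring
  rcases le_or_gt M 1 with hM1 | hM1
  · exact le_trans hM1 (le_max_left _ _)
  · refine le_trans ?_ (le_max_right _ _)
    have hMpos : (0:ℝ) < M := by linarith
    have h5 : (1 + M) ^ σ ≤ 2 ^ σ * M ^ σ := by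
      rw [← Real.mul_rpow (by norm_num) hM0]
      exact Real.rpow_le_rpow h1M.le (by linarith) hσ.le
    have h6 : M ^ P ≤ E * M ^ σ := by
      calc M ^ P ≤ (D + K₀) * (1 + M) ^ σ := hfinal
        _ ≤ (D + K₀) * (2 ^ σ * M ^ σ) := mul_le_mul_of_nonneg_left h5 (by linarith)
        _ = E * M ^ σ := by rw [hEdef]; ring
    have h7 : M ^ (γ - α - β) ≤ E := by
      have hsplit : M ^ P = M ^ σ * M ^ (γ - α - β) := by
        rw [← Real.rpow_add hMpos]
        congr 1
        simp only [hσdef, hPdef]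
        ring
      have hMσpos : (0:ℝ) < M ^ σ := Real.rpow_pos_of_pos hMpos _
      rw [hsplit] at h6
      refine le_of_mul_le_mul_left ?_ hMσpos
      calc M ^ σ * M ^ (γ - α - β) ≤ E * M ^ σ := h6
        _ = M ^ σ * E := by ring
    calc M = (M ^ (γ - α - β)) ^ (1 / (γ - α - β)) := by
          rw [← Real.rpow_mul hM0]
          rw [mul_one_div, div_self (by linarith : γ - α - β ≠ 0), Real.rpow_one]
      _ ≤ E ^ (1 / (γ - α - β)) :=
          Real.rpow_le_rpow (Real.rpow_nonneg hM0 _) h7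
            (le_of_lt (div_pos one_pos (by linarith)))
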